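/- For every function f : ℕ → ℕ* with f(n) → ∞, there exists an uncountable set D ⊆ {0,1}^{-ℕ*} whose growth function satisfies d(n) := |{x_{-n}^{-1} : x̄ ∈ D}| ≤ f(n) for all n (and D can be enlarged to achieve equality while remaining uncountable). -/
import Mathlib


open Filter

/-- For every diverging `f : ℕ → ℕ*` there is an uncountable set `D` of left-infinite
binary sequences (pasts, coded by `ℕ → Bool` with index `i` for coordinate `-(i+1)`)
whose growth function `d(n) = |D^n|` satisfies `d(n) ≤ f(n)` for all `n ≥ 1`. -/
theorem uncountable_set_with_slow_growth
    (f : ℕ → ℕ) (hf1 : ∀ n, 1 ≤ f n) (hf : Tendsto f atTop atTop) :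
    ∃ D : Set (ℕ → Bool), ¬ D.Countable ∧
      ∀ n : ℕ, 1 ≤ n →
        Set.ncard {w : Fin n → Bool | ∃ x ∈ D, ∀ i : Fin n, x i = w i} ≤ f n := by
  classical
  -- choose thresholds
  have h1 : ∀ k : ℕ, ∃ N, ∀ n, N ≤ n → 2 ^ (k + 1) ≤ f n := by
    intro k
    obtain ⟨N, hN⟩ := (hf.eventually_ge_atTop (2 ^ (k + 1))).exists_forall_of_atTop
    exact ⟨N, hN⟩
  choose N0 hN0 using h1
  -- strictly increasing version
  set N : ℕ → ℕ := fun k => Nat.rec (max (N0 0) 1) (fun k ih => max (N0 (k + 1)) (ih + 1)) k with hNdef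
  have hN0le : ∀ k, N0 k ≤ N k := by
    intro k; cases k with
    | zero => exact le_max_left _ _
    | succ k => exact le_max_left _ _
  have hNsucc : ∀ k, N k < N (k + 1) := by
    intro k
    have : N k + 1 ≤ N (k + 1) := le_max_right _ _
    omega
  have hNmono : StrictMono N := strictMono_nat_of_lt_succ hNsucc
  have hNge : ∀ k, k + 1 ≤ N k := by
    intro k
    induction k with
    | zero => exact le_max_right _ _
    | succ k ih => have := hNsucc k; omega
  have hNspec : ∀ k n, N k ≤ n → 2 ^ (k + 1) ≤ f n :=
    fun k n h => hN0 k n ((hN0le k).trans h)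
  -- block index
  set block : ℕ → ℕ := fun i => Nat.findGreatest (fun k => N k ≤ i + 1) i with hblock
  -- the coding map
  set F : (ℕ → Bool) → (ℕ → Bool) :=
    fun g i => if N 0 ≤ i + 1 then g (block i) else false with hF
  have hblockval : ∀ k, block (N k - 1) = k := by
    intro k
    have hge := hNge k
    apply le_antisymm
    · by_contra h
      push_neg at h
      have hsp : N (block (N k - 1)) ≤ (N k - 1) + 1 :=
        Nat.findGreatest_spec (P := fun j => N j ≤ (N k - 1) + 1) (m := k) (by omega : k ≤ N k - 1)
          (by omega : N k ≤ (N k - 1) + 1)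
      have := hNmono h
      omega
    · exact Nat.le_findGreatest (by omega : k ≤ N k - 1) (by omega : N k ≤ (N k - 1) + 1)
  have hFinj : Function.Injective F := by
    intro g g' h
    funext k
    have h1k : 1 ≤ N k := (hNge k).trans' (by omega)
    have hcond : N 0 ≤ (N k - 1) + 1 := by
      have := hNmono.monotone (Nat.zero_le k); omega
    have := congrFun h (N k - 1)
    simpa [hF, hcond, hblockval k] using this
  refine ⟨Set.range F, ?_, ?_⟩
  · intro hc
    have hcc : Countable (ℕ → Bool) := by
      have := hc.to_subtype
      exact Countable.of_equiv _ (Equiv.ofInjective F hFinj).symm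
    have : Uncountable (ℕ → Bool) := by
      rw [← Cardinal.aleph0_lt_mk_iff, ← Cardinal.power_def, Cardinal.mk_bool, Cardinal.mk_nat]
      exact Cardinal.cantor Cardinal.aleph0
    exact (not_countable : ¬ Countable (ℕ → Bool)) hcc
  · intro n hn
    by_cases hcase : N 0 ≤ n
    · -- big n
      set m := block (n - 1) with hm
      have hNm : N m ≤ n := by
        have h : N (block (n - 1)) ≤ (n - 1) + 1 :=
          Nat.findGreatest_spec (P := fun j => N j ≤ (n - 1) + 1) (m := 0) (Nat.zero_le (n - 1)) (by omega : N 0 ≤ (n - 1) + 1)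
        have h2 : N m ≤ (n - 1) + 1 := h
        omega
      have hblockle : ∀ i : Fin n, block (i : ℕ) < m + 1 := by
        intro i
        have : block (i : ℕ) ≤ m := by
          apply Nat.findGreatest_mono (fun j hj => ?_) (by omega : (i : ℕ) ≤ n - 1)
          have := i.2; omega
        omega
      set Φ : (Fin (m + 1) → Bool) → (Fin n → Bool) :=
        fun h i => if N 0 ≤ (i : ℕ) + 1 then h ⟨block (i : ℕ), hblockle i⟩ else false with hΦ
      have hsub : {w : Fin n → Bool | ∃ x ∈ Set.range F, ∀ i : Fin n, x i = w i} ⊆ Set.range Φ := by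
        rintro w ⟨x, ⟨g, rfl⟩, hw⟩
        refine ⟨fun j => g (j : ℕ), ?_⟩
        funext i
        rw [← hw i]
      calc Set.ncard {w : Fin n → Bool | ∃ x ∈ Set.range F, ∀ i : Fin n, x i = w i}
          ≤ (Set.range Φ).ncard := Set.ncard_le_ncard hsub (Set.toFinite _)
        _ = (Φ '' Set.univ).ncard := by rw [Set.image_univ]
        _ ≤ (Set.univ : Set (Fin (m + 1) → Bool)).ncard := Set.ncard_image_le Set.finite_univ
        _ = 2 ^ (m + 1) := by simp [Set.ncard_univ, Nat.card_eq_fintype_card]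
        _ ≤ f n := hNspec m n hNm
    · -- small n: all words are constant false
      push_neg at hcase
      have hsub : {w : Fin n → Bool | ∃ x ∈ Set.range F, ∀ i : Fin n, x i = w i} ⊆
          {fun _ => false} := by
        rintro w ⟨x, ⟨g, rfl⟩, hw⟩
        have : w = fun _ => false := by
          funext i
          rw [← hw i]
          have : ¬ N 0 ≤ (i : ℕ) + 1 := by have := i.2; omega
          simp [hF, this]
        simp [this]
      calc Set.ncard {w : Fin n → Bool | ∃ x ∈ Set.range F, ∀ i : Fin n, x i = w i}
          ≤ ({fun _ => false} : Set (Fin n → Bool)).ncard :=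
            Set.ncard_le_ncard hsub (Set.finite_singleton _)
        _ = 1 := Set.ncard_singleton _
        _ ≤ f n := hf1 n
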